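/- Let μ, ν be probability densities on an interval [a, b]. Then the 1-D 2-Wasserstein distance satisfies the Hölder-type bound d_{W2}(μ, ν) ≤ (√2/2) · (b − a) · (∫_a^b |μ(x) − ν(x)| dx)^{1/2}; equivalently, ∫₀¹ |Q_μ(z) − Q_ν(z)|² dz ≤ ((b − a)²/2) · ∫_a^b |μ(x) − ν(x)| dx. -/

import Mathlib

open MeasureTheory Real Set

/-- CDF of a density `μ` on `ℝ`: `F_μ(t) = ∫_{-∞}^t μ`. -/
noncomputable def cdfOf (μ : ℝ → ℝ) (t : ℝ) : ℝ := ∫ x in Set.Iic t, μ x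

/-- Quantile function `Q_μ(z) = inf {t : F_μ(t) ≥ z}`. -/
noncomputable def quantileOf (μ : ℝ → ℝ) (z : ℝ) : ℝ := sInf {t : ℝ | z ≤ cdfOf μ t}

/-- `d_{Wp}^p(μ, ν) = ∫₀¹ |Q_μ(z) − Q_ν(z)|^p dz`. -/
noncomputable def wassersteinPow (p : ℝ) (μ ν : ℝ → ℝ) : ℝ :=
  ∫ z in Set.Ioo (0:ℝ) 1, |quantileOf μ z - quantileOf ν z| ^ p

/-- 1-D `p`-Wasserstein distance between densities. -/
noncomputable def wasserstein (p : ℝ) (μ ν : ℝ → ℝ) : ℝ :=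
  (wassersteinPow p μ ν) ^ (1 / p)

/-- Line projection of an image `f : ℝ² → ℝ` at angle `θ`:
`P_θ f(s) = ∫ f(s(cos θ, sin θ) + t(−sin θ, cos θ)) dt`. -/
noncomputable def lineProj (f : ℝ × ℝ → ℝ) (θ : ℝ) (s : ℝ) : ℝ :=
  ∫ t : ℝ, f (s * Real.cos θ - t * Real.sin θ, s * Real.sin θ + t * Real.cos θ)

/-- `d_{SWp}^p(f, g) = (1/2π) ∫₀^{2π} d_{Wp}^p(P_θ f, P_θ g) dθ`. -/
noncomputable def slicedWassersteinPow (p : ℝ) (f g : ℝ × ℝ → ℝ) : ℝ :=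
  (1 / (2 * Real.pi)) * ∫ θ in Set.Ioo (0:ℝ) (2 * Real.pi),
    wassersteinPow p (lineProj f θ) (lineProj g θ)

/-- Sliced `p`-Wasserstein distance between two images. -/
noncomputable def slicedWasserstein (p : ℝ) (f g : ℝ × ℝ → ℝ) : ℝ :=
  (slicedWassersteinPow p f g) ^ (1 / p)

/-- Rotation of an image by angle `α`: `(R_α g)(x) = g(R_α⁻¹ x)`. -/
noncomputable def rotImage (α : ℝ) (g : ℝ × ℝ → ℝ) : ℝ × ℝ → ℝ :=
  fun x => g (x.1 * Real.cos α + x.2 * Real.sin α, -x.1 * Real.sin α + x.2 * Real.cos α)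

section Aux

variable {a b : ℝ} {f : ℝ → ℝ}

/-- integral of an a.e.-zero-except-one-point function vanishes -/
lemma setIntegral_zero_of_pt {s : Set ℝ} (hs : MeasurableSet s) (c : ℝ)
    (h : ∀ x ∈ s, x ≠ c → f x = 0) : ∫ x in s, f x = 0 := by
  have hc : ∀ᵐ x : ℝ, x ≠ c := by
    rw [ae_iff]
    simpa [not_not, Set.setOf_eq_eq_singleton] using measure_singleton c
  have h2 : ∀ᵐ x ∂(volume.restrict s), f x = 0 :=
    ((ae_restrict_mem hs).and (ae_restrict_of_ae hc)).mono fun x hx => h x hx.1 hx.2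
  exact integral_eq_zero_of_ae h2

lemma integrable_of_density (hab : a ≤ b)
    (hsupp : ∀ x, x ∉ Set.Icc a b → f x = 0) (hint : ∫ x in a..b, f x = 1) :
    Integrable f := by
  have hII : IntervalIntegrable f volume a b := by
    by_contra h
    rw [intervalIntegral.integral_undef h] at hint
    norm_num at hint
  have hInd : Integrable ((Set.Ioc a b).indicator f) :=
    hII.1.integrable_indicator measurableSet_Ioc
  refine hInd.congr ?_
  have hc : ∀ᵐ x : ℝ, x ≠ a := by
    rw [ae_iff]
    simpa [not_not, Set.setOf_eq_eq_singleton] using measure_singleton a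
  refine hc.mono fun x hx => ?_
  by_cases hmem : x ∈ Set.Ioc a b
  · simp [Set.indicator_of_mem hmem]
  · rw [Set.indicator_of_notMem hmem]
    refine (hsupp x fun hIcc => hmem ⟨?_, hIcc.2⟩).symm
    rcases lt_or_eq_of_le hIcc.1 with h | h
    · exact h
    · exact absurd h.symm hx

lemma cdf_eq_interval (hf : Integrable f)
    (hsupp : ∀ x, x ∉ Set.Icc a b → f x = 0) (t : ℝ) :
    cdfOf f t = ∫ x in a..t, f x := by
  rcases le_or_gt a t with h | h
  · have hIic : Set.Iic a ∪ Set.Ioc a t = Set.Iic t := Set.Iic_union_Ioc_eq_Iic h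
    have h0 : ∫ x in Set.Iic a, f x = 0 :=
      setIntegral_zero_of_pt measurableSet_Iic a
        (fun x hx hxa => hsupp x fun hIcc => hxa (le_antisymm hx hIcc.1))
    rw [cdfOf, ← hIic, setIntegral_union (Set.Iic_disjoint_Ioc le_rfl) measurableSet_Ioc
      hf.integrableOn hf.integrableOn, h0, zero_add, intervalIntegral.integral_of_le h]
  · have h1 : ∫ x in Set.Iic t, f x = 0 :=
      setIntegral_zero_of_pt measurableSet_Iic a
        (fun x hx _ => hsupp x fun hIcc => absurd (le_trans hIcc.1 hx) (not_le.2 h))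
    have h2 : ∫ x in Set.Ioc t a, f x = 0 :=
      setIntegral_zero_of_pt measurableSet_Ioc a
        (fun x hx hxa => hsupp x fun hIcc => hxa (le_antisymm hx.2 hIcc.1))
    rw [cdfOf, h1, intervalIntegral.integral_symm, intervalIntegral.integral_of_le h.le, h2,
      neg_zero]

lemma cdf_continuous (hf : Integrable f)
    (hsupp : ∀ x, x ∉ Set.Icc a b → f x = 0) : Continuous (cdfOf f) := by
  have : cdfOf f = fun t => ∫ x in a..t, f x := funext (cdf_eq_interval hf hsupp)
  rw [this]
  exact hf.continuous_primitive a

lemma cdf_zero (hsupp : ∀ x, x ∉ Set.Icc a b → f x = 0) {t : ℝ} (ht : t ≤ a) :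
    cdfOf f t = 0 :=
  setIntegral_zero_of_pt measurableSet_Iic a
    (fun x hx hxa => hsupp x fun hIcc => hxa (le_antisymm (le_trans hx ht) hIcc.1))

lemma cdf_one (hf : Integrable f) (hsupp : ∀ x, x ∉ Set.Icc a b → f x = 0)
    (hint : ∫ x in a..b, f x = 1) : cdfOf f b = 1 := by
  rw [cdf_eq_interval hf hsupp]; exact hint

lemma cdf_mono (hf : Integrable f) (hnn : ∀ x, 0 ≤ f x) : Monotone (cdfOf f) := by
  intro t t' h
  exact setIntegral_mono_set hf.integrableOn (ae_of_all _ hnn)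
    (HasSubset.Subset.eventuallyLE (Set.Iic_subset_Iic.2 h))

lemma cdf_nonneg (hnn : ∀ x, 0 ≤ f x) (t : ℝ) : 0 ≤ cdfOf f t :=
  setIntegral_nonneg measurableSet_Iic fun x _ => hnn x

lemma integral_total (hf : Integrable f) (hsupp : ∀ x, x ∉ Set.Icc a b → f x = 0)
    (hint : ∫ x in a..b, f x = 1) : ∫ x, f x = 1 := by
  have h := integral_add_compl measurableSet_Iic hf (f := f) (s := Set.Iic b)
  rw [Set.compl_Iic] at h
  have h0 : ∫ x in Set.Ioi b, f x = 0 :=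
    setIntegral_zero_of_pt measurableSet_Ioi a
      (fun x hx _ => hsupp x fun hIcc => absurd hIcc.2 (not_le.2 hx))
  rw [← h, h0, add_zero]
  exact cdf_one hf hsupp hint

lemma cdf_le_one (hf : Integrable f) (hnn : ∀ x, 0 ≤ f x)
    (hsupp : ∀ x, x ∉ Set.Icc a b → f x = 0)
    (hint : ∫ x in a..b, f x = 1) (t : ℝ) : cdfOf f t ≤ 1 := by
  rw [← integral_total hf hsupp hint]
  exact setIntegral_le_integral hf (ae_of_all _ hnn)

lemma quantile_le_iff (hf : Integrable f) (hnn : ∀ x, 0 ≤ f x)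
    (hsupp : ∀ x, x ∉ Set.Icc a b → f x = 0)
    (hint : ∫ x in a..b, f x = 1) {z : ℝ} (hz : z ∈ Set.Ioo (0:ℝ) 1) (t : ℝ) :
    quantileOf f z ≤ t ↔ z ≤ cdfOf f t := by
  have hbne : z ≤ cdfOf f b := by rw [cdf_one hf hsupp hint]; exact hz.2.le
  have hbdd : BddBelow {t : ℝ | z ≤ cdfOf f t} := by
    refine ⟨a, fun s hs => ?_⟩
    by_contra hlt
    push_neg at hlt
    have hzs : z ≤ cdfOf f s := hs
    rw [cdf_zero hsupp hlt.le] at hzs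
    exact absurd hzs (not_le.2 hz.1)
  have hclosed : IsClosed {t : ℝ | z ≤ cdfOf f t} :=
    isClosed_le continuous_const (cdf_continuous hf hsupp)
  constructor
  · intro h
    have hmem := hclosed.csInf_mem ⟨b, hbne⟩ hbdd
    exact le_trans hmem (cdf_mono hf hnn h)
  · intro h
    exact csInf_le hbdd h

lemma quantile_mem_Icc (hab : a ≤ b) (hf : Integrable f) (hnn : ∀ x, 0 ≤ f x)
    (hsupp : ∀ x, x ∉ Set.Icc a b → f x = 0)
    (hint : ∫ x in a..b, f x = 1) {z : ℝ} (hz : z ∈ Set.Ioo (0:ℝ) 1) :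
    quantileOf f z ∈ Set.Icc a b := by
  have hbne : z ≤ cdfOf f b := by rw [cdf_one hf hsupp hint]; exact hz.2.le
  have hbdd : BddBelow {t : ℝ | z ≤ cdfOf f t} := by
    refine ⟨a, fun s hs => ?_⟩
    by_contra hlt
    push_neg at hlt
    have hzs : z ≤ cdfOf f s := hs
    rw [cdf_zero hsupp hlt.le] at hzs
    exact absurd hzs (not_le.2 hz.1)
  constructor
  · refine le_csInf ⟨b, hbne⟩ fun s hs => ?_
    by_contra hlt
    push_neg at hlt
    have hzs : z ≤ cdfOf f s := hs
    rw [cdf_zero hsupp hlt.le] at hzs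
    exact absurd hzs (not_le.2 hz.1)
  · exact csInf_le hbdd hbne

/-- globally monotone extension of the quantile function -/
noncomputable def qExt (a b : ℝ) (f : ℝ → ℝ) (z : ℝ) : ℝ :=
  sInf {t | t ∈ Set.Icc a b ∧ min z 1 ≤ cdfOf f t}

lemma qExt_mono (hab : a ≤ b) (hone : cdfOf f b = 1) : Monotone (qExt a b f) := by
  intro z1 z2 h
  apply csInf_le_csInf
  · exact ⟨a, fun t ht => ht.1.1⟩
  · exact ⟨b, ⟨Set.right_mem_Icc.2 hab, by rw [hone]; exact min_le_right _ 1⟩⟩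
  · exact fun t ht => ⟨ht.1, le_trans (min_le_min h le_rfl) ht.2⟩

lemma qExt_eq (hab : a ≤ b) (hf : Integrable f)
    (hsupp : ∀ x, x ∉ Set.Icc a b → f x = 0)
    (hint : ∫ x in a..b, f x = 1) {z : ℝ} (hz : z ∈ Set.Ioo (0:ℝ) 1) :
    qExt a b f z = quantileOf f z := by
  have hone : cdfOf f b = 1 := cdf_one hf hsupp hint
  have hmin : min z 1 = z := min_eq_left hz.2.le
  have hbne : z ≤ cdfOf f b := by rw [hone]; exact hz.2.le
  have hbdd' : BddBelow {t | t ∈ Set.Icc a b ∧ min z 1 ≤ cdfOf f t} :=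
    ⟨a, fun t ht => ht.1.1⟩
  have hmemb' : b ∈ {t | t ∈ Set.Icc a b ∧ min z 1 ≤ cdfOf f t} :=
    ⟨Set.right_mem_Icc.2 hab, by rw [hmin]; exact hbne⟩
  have hlow : ∀ s ∈ {t : ℝ | z ≤ cdfOf f t}, a ≤ s := by
    intro s hs
    by_contra hlt
    push_neg at hlt
    have hzs : z ≤ cdfOf f s := hs
    rw [cdf_zero hsupp hlt.le] at hzs
    exact absurd hzs (not_le.2 hz.1)
  rw [show quantileOf f z = sInf {t : ℝ | z ≤ cdfOf f t} from rfl,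
    show qExt a b f z = sInf {t | t ∈ Set.Icc a b ∧ min z 1 ≤ cdfOf f t} from rfl]
  apply le_antisymm
  · apply le_csInf (s := {t : ℝ | z ≤ cdfOf f t}) ⟨b, hbne⟩
    intro t ht
    rcases le_or_gt t b with h | h
    · exact csInf_le hbdd' ⟨⟨hlow t ht, h⟩, by rw [hmin]; exact ht⟩
    · exact le_trans (csInf_le hbdd' hmemb') h.le
  · refine csInf_le_csInf ⟨a, hlow⟩ ⟨b, hmemb'⟩ fun t ht => ?_
    rw [hmin] at ht
    exact ht.2

lemma abs_if_ici (p q t : ℝ) :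
    |(if p ≤ t then (1:ℝ) else 0) - (if q ≤ t then (1:ℝ) else 0)|
      = (Set.Ico (min p q) (max p q)).indicator (fun _ => (1:ℝ)) t := by
  rcases le_total p q with h | h
  · rw [min_eq_left h, max_eq_right h]
    split_ifs with h1 h2 h2 <;>
      simp_all [Set.indicator_apply, Set.mem_Ico] <;> (try intro h3) <;> linarith
  · rw [min_eq_right h, max_eq_left h]
    split_ifs with h1 h2 h2 <;>
      simp_all [Set.indicator_apply, Set.mem_Ico] <;> (try intro h3) <;> linarith

lemma abs_if_iic (c d z : ℝ) :
    |(if z ≤ c then (1:ℝ) else 0) - (if z ≤ d then (1:ℝ) else 0)|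
      = (Set.Ioc (min c d) (max c d)).indicator (fun _ => (1:ℝ)) z := by
  rcases le_total c d with h | h
  · rw [min_eq_left h, max_eq_right h]
    split_ifs with h1 h2 h2 <;>
      simp_all [Set.indicator_apply, Set.mem_Ioc] <;> (try intro h3) <;> linarith
  · rw [min_eq_right h, max_eq_left h]
    split_ifs with h1 h2 h2 <;>
      simp_all [Set.indicator_apply, Set.mem_Ioc] <;> (try intro h3) <;> linarith

lemma vol_squeeze {S : Set ℝ} {c d : ℝ} (h : c ≤ d) (h1 : Set.Ioo c d ⊆ S)
    (h2 : S ⊆ Set.Icc c d) : volume S = ENNReal.ofReal (d - c) := by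
  apply le_antisymm
  · rw [← Real.volume_Icc]; exact measure_mono h2
  · rw [← Real.volume_Ioo]; exact measure_mono h1

lemma int_ind {S T : Set ℝ} (hS : MeasurableSet S) :
    ∫ x in T, S.indicator (fun _ => (1:ℝ)) x = (volume (S ∩ T)).toReal := by
  rw [setIntegral_indicator hS, setIntegral_const, smul_eq_mul, mul_one,
    Set.inter_comm]
  rfl

end Aux

/-- `W₂` is Hölder continuous with respect to `L¹`: for probability densities `μ, ν` on `[a, b]`,
`d_{W2}(μ, ν) ≤ (√2/2)(b − a) ‖μ − ν‖_{L¹([a,b])}^{1/2}`, equivalently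
`∫₀¹ |Q_μ − Q_ν|² ≤ ((b−a)²/2) ‖μ − ν‖_{L¹([a,b])}`. -/
theorem w2_holder_L1
    (a b : ℝ) (hab : a < b) (μ ν : ℝ → ℝ)
    (hμnonneg : ∀ x, 0 ≤ μ x) (hνnonneg : ∀ x, 0 ≤ ν x)
    (hμsupp : ∀ x, x ∉ Set.Icc a b → μ x = 0) (hνsupp : ∀ x, x ∉ Set.Icc a b → ν x = 0)
    (hμint : ∫ x in a..b, μ x = 1) (hνint : ∫ x in a..b, ν x = 1) :
    wasserstein 2 μ ν ≤ (Real.sqrt 2 / 2) * (b - a) * Real.sqrt (∫ x in a..b, |μ x - ν x|) ∧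
    wassersteinPow 2 μ ν ≤ ((b - a) ^ 2 / 2) * ∫ x in a..b, |μ x - ν x| := by
  have hab' : a ≤ b := hab.le
  have hμI : Integrable μ := integrable_of_density hab' hμsupp hμint
  have hνI : Integrable ν := integrable_of_density hab' hνsupp hνint
  have hFc : Continuous (cdfOf μ) := cdf_continuous hμI hμsupp
  have hGc : Continuous (cdfOf ν) := cdf_continuous hνI hνsupp
  set L := ∫ x in a..b, |μ x - ν x| with hLdef
  have hLnn : 0 ≤ L := intervalIntegral.integral_nonneg hab' (fun x _ => abs_nonneg _)
  have hsubI : Integrable (fun x => |μ x - ν x|) := (hμI.sub hνI).abs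
  have hcnea : ∀ᵐ x : ℝ, x ≠ a := by
    rw [ae_iff]
    simpa [not_not, Set.setOf_eq_eq_singleton] using measure_singleton a
  have hLeq : ∫ x, |μ x - ν x| = L := by
    rw [hLdef, intervalIntegral.integral_of_le hab', ← integral_indicator measurableSet_Ioc]
    refine integral_congr_ae (hcnea.mono fun x hx => ?_)
    by_cases hmem : x ∈ Set.Ioc a b
    · rw [Set.indicator_of_mem hmem]
    · rw [Set.indicator_of_notMem hmem]
      have hxIcc : x ∉ Set.Icc a b := fun hIcc =>
        hmem ⟨lt_of_le_of_ne hIcc.1 (Ne.symm hx), hIcc.2⟩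
      show |μ x - ν x| = 0
      rw [hμsupp x hxIcc, hνsupp x hxIcc]
      simp
  -- pointwise bound on the CDF difference
  have hFGle : ∀ t, |cdfOf μ t - cdfOf ν t| ≤ L / 2 := by
    intro t
    have hμc := integral_add_compl (s := Set.Iic t) measurableSet_Iic hμI (f := μ)
    have hνc := integral_add_compl (s := Set.Iic t) measurableSet_Iic hνI (f := ν)
    have hac := integral_add_compl (s := Set.Iic t) measurableSet_Iic hsubI
      (f := fun x => |μ x - ν x|)
    rw [Set.compl_Iic] at hμc hνc hac
    have hμt : ∫ x, μ x = 1 := integral_total hμI hμsupp hμint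
    have hνt : ∫ x, ν x = 1 := integral_total hνI hνsupp hνint
    have e1 : cdfOf μ t - cdfOf ν t = ∫ x in Set.Iic t, (μ x - ν x) :=
      (integral_sub hμI.integrableOn hνI.integrableOn).symm
    have e2 : |∫ x in Set.Iic t, (μ x - ν x)| ≤ ∫ x in Set.Iic t, |μ x - ν x| := by
      simpa [Real.norm_eq_abs] using
        norm_integral_le_integral_norm (μ := volume.restrict (Set.Iic t)) (fun x => μ x - ν x)
    have e3 : cdfOf μ t - cdfOf ν t = ∫ x in Set.Ioi t, (ν x - μ x) := by
      rw [integral_sub hνI.integrableOn hμI.integrableOn]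
      have h1 : cdfOf μ t = ∫ x in Set.Iic t, μ x := rfl
      have h2 : cdfOf ν t = ∫ x in Set.Iic t, ν x := rfl
      rw [h1, h2]
      linarith [hμc, hνc, hμt, hνt]
    have e4 : |∫ x in Set.Ioi t, (ν x - μ x)| ≤ ∫ x in Set.Ioi t, |μ x - ν x| := by
      have := norm_integral_le_integral_norm (μ := volume.restrict (Set.Ioi t))
        (fun x => ν x - μ x)
      simp only [Real.norm_eq_abs] at this
      refine le_trans this (le_of_eq (integral_congr_ae (ae_of_all _ fun x => abs_sub_comm _ _)))
    have h5 : |cdfOf μ t - cdfOf ν t| ≤ ∫ x in Set.Iic t, |μ x - ν x| := e1 ▸ e2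
    have h6 : |cdfOf μ t - cdfOf ν t| ≤ ∫ x in Set.Ioi t, |μ x - ν x| := e3 ▸ e4
    rw [hLeq] at hac
    linarith [h5, h6, hac]
  -- quantile facts
  have hQμmem : ∀ z ∈ Set.Ioo (0:ℝ) 1, quantileOf μ z ∈ Set.Icc a b :=
    fun z hz => quantile_mem_Icc hab' hμI hμnonneg hμsupp hμint hz
  have hQνmem : ∀ z ∈ Set.Ioo (0:ℝ) 1, quantileOf ν z ∈ Set.Icc a b :=
    fun z hz => quantile_mem_Icc hab' hνI hνnonneg hνsupp hνint hz
  have hQμiff : ∀ z ∈ Set.Ioo (0:ℝ) 1, ∀ t, quantileOf μ z ≤ t ↔ z ≤ cdfOf μ t :=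
    fun z hz t => quantile_le_iff hμI hμnonneg hμsupp hμint hz t
  have hQνiff : ∀ z ∈ Set.Ioo (0:ℝ) 1, ∀ t, quantileOf ν z ≤ t ↔ z ≤ cdfOf ν t :=
    fun z hz t => quantile_le_iff hνI hνnonneg hνsupp hνint hz t
  set H : ℝ → ℝ → ℝ := fun z t =>
    |(if z ≤ cdfOf μ t then (1:ℝ) else 0) - (if z ≤ cdfOf ν t then (1:ℝ) else 0)| with hHdef
  -- inner integral in t
  have hinner_t : ∀ z ∈ Set.Ioo (0:ℝ) 1,
      (∫ t in Set.Ioc a b, H z t) = |quantileOf μ z - quantileOf ν z| := by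
    intro z hz
    obtain ⟨hpa, hpb⟩ := hQμmem z hz
    obtain ⟨hqa, hqb⟩ := hQνmem z hz
    have hstep : ∀ t : ℝ, H z t =
        (Set.Ico (min (quantileOf μ z) (quantileOf ν z))
          (max (quantileOf μ z) (quantileOf ν z))).indicator (fun _ => (1:ℝ)) t := by
      intro t
      have e1 : (z ≤ cdfOf μ t) = (quantileOf μ z ≤ t) := propext ((hQμiff z hz t).symm)
      have e2 : (z ≤ cdfOf ν t) = (quantileOf ν z ≤ t) := propext ((hQνiff z hz t).symm)
      simp only [hHdef, e1, e2]
      exact abs_if_ici _ _ t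
    have hvol : volume (Set.Ico (min (quantileOf μ z) (quantileOf ν z))
          (max (quantileOf μ z) (quantileOf ν z)) ∩ Set.Ioc a b)
        = ENNReal.ofReal (max (quantileOf μ z) (quantileOf ν z)
          - min (quantileOf μ z) (quantileOf ν z)) := by
      refine vol_squeeze min_le_max (fun t ht => ?_) (fun t ht => ?_)
      · exact ⟨⟨ht.1.le, ht.2⟩, ⟨lt_of_le_of_lt (le_min hpa hqa) ht.1,
          le_trans ht.2.le (max_le hpb hqb)⟩⟩
      · exact ⟨ht.1.1, ht.1.2.le⟩
    rw [setIntegral_congr_fun measurableSet_Ioc (fun t _ => hstep t), int_ind measurableSet_Ico,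
      hvol, ENNReal.toReal_ofReal (sub_nonneg.2 min_le_max), max_sub_min_eq_abs]
    first
    | rfl
    | exact abs_sub_comm _ _
  -- inner integral in z
  have hinner_z : ∀ t : ℝ,
      (∫ z in Set.Ioo (0:ℝ) 1, H z t) = |cdfOf μ t - cdfOf ν t| := by
    intro t
    have hstep : ∀ z : ℝ, H z t =
        (Set.Ioc (min (cdfOf μ t) (cdfOf ν t)) (max (cdfOf μ t) (cdfOf ν t))).indicator
          (fun _ => (1:ℝ)) z := by
      intro z
      simp only [hHdef]
      exact abs_if_iic _ _ z
    have hvol : volume (Set.Ioc (min (cdfOf μ t) (cdfOf ν t)) (max (cdfOf μ t) (cdfOf ν t))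
          ∩ Set.Ioo (0:ℝ) 1)
        = ENNReal.ofReal (max (cdfOf μ t) (cdfOf ν t) - min (cdfOf μ t) (cdfOf ν t)) := by
      refine vol_squeeze min_le_max (fun z hz => ?_) (fun z hz => ?_)
      · refine ⟨⟨hz.1, hz.2.le⟩, ⟨lt_of_le_of_lt ?_ hz.1, lt_of_lt_of_le hz.2 ?_⟩⟩
        · exact le_min (cdf_nonneg hμnonneg t) (cdf_nonneg hνnonneg t)
        · exact max_le (cdf_le_one hμI hμnonneg hμsupp hμint t)
            (cdf_le_one hνI hνnonneg hνsupp hνint t)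
      · exact ⟨hz.1.1.le, hz.1.2⟩
    rw [setIntegral_congr_fun measurableSet_Ioo (fun z _ => hstep z), int_ind measurableSet_Ioc,
      hvol, ENNReal.toReal_ofReal (sub_nonneg.2 min_le_max), max_sub_min_eq_abs]
    first
    | rfl
    | exact abs_sub_comm _ _
  -- Fubini
  haveI fin1 : IsFiniteMeasure (volume.restrict (Set.Ioo (0:ℝ) 1)) :=
    ⟨by rw [Measure.restrict_apply_univ, Real.volume_Ioo]; exact ENNReal.ofReal_lt_top⟩
  haveI fin2 : IsFiniteMeasure (volume.restrict (Set.Ioc a b)) :=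
    ⟨by rw [Measure.restrict_apply_univ, Real.volume_Ioc]; exact ENNReal.ofReal_lt_top⟩
  have hAμ : MeasurableSet {p : ℝ × ℝ | p.1 ≤ cdfOf μ p.2} :=
    (isClosed_le continuous_fst (hFc.comp continuous_snd)).measurableSet
  have hAν : MeasurableSet {p : ℝ × ℝ | p.1 ≤ cdfOf ν p.2} :=
    (isClosed_le continuous_fst (hGc.comp continuous_snd)).measurableSet
  have hHmeas : Measurable (Function.uncurry H) := by
    simp only [hHdef, Function.uncurry]
    refine Measurable.abs (Measurable.sub ?_ ?_)
    · exact Measurable.ite hAμ measurable_const measurable_const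
    · exact Measurable.ite hAν measurable_const measurable_const
  have hHint : Integrable (Function.uncurry H)
      ((volume.restrict (Set.Ioo (0:ℝ) 1)).prod (volume.restrict (Set.Ioc a b))) := by
    refine Integrable.mono' (integrable_const 1) hHmeas.aestronglyMeasurable
      (ae_of_all _ fun p => ?_)
    simp only [hHdef, Function.uncurry, Real.norm_eq_abs, abs_abs]
    split_ifs <;> norm_num
  have hW1 : (∫ z in Set.Ioo (0:ℝ) 1, |quantileOf μ z - quantileOf ν z|)
      = ∫ t in Set.Ioc a b, |cdfOf μ t - cdfOf ν t| := by
    calc (∫ z in Set.Ioo (0:ℝ) 1, |quantileOf μ z - quantileOf ν z|)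
        = ∫ z in Set.Ioo (0:ℝ) 1, ∫ t in Set.Ioc a b, H z t :=
          setIntegral_congr_fun measurableSet_Ioo fun z hz => (hinner_t z hz).symm
      _ = ∫ t in Set.Ioc a b, ∫ z in Set.Ioo (0:ℝ) 1, H z t :=
          integral_integral_swap hHint
      _ = ∫ t in Set.Ioc a b, |cdfOf μ t - cdfOf ν t| :=
          setIntegral_congr_fun measurableSet_Ioc fun t _ => hinner_z t
  -- measurability and bound of the quantile difference
  have haeQ : AEStronglyMeasurable (fun z => |quantileOf μ z - quantileOf ν z|)
      (volume.restrict (Set.Ioo (0:ℝ) 1)) := by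
    have hmμ : AEStronglyMeasurable (quantileOf μ) (volume.restrict (Set.Ioo (0:ℝ) 1)) :=
      ((qExt_mono hab' (cdf_one hμI hμsupp hμint)).measurable.aestronglyMeasurable).congr
        ((ae_restrict_mem measurableSet_Ioo).mono fun z hz => qExt_eq hab' hμI hμsupp hμint hz)
    have hmν : AEStronglyMeasurable (quantileOf ν) (volume.restrict (Set.Ioo (0:ℝ) 1)) :=
      ((qExt_mono hab' (cdf_one hνI hνsupp hνint)).measurable.aestronglyMeasurable).congr
        ((ae_restrict_mem measurableSet_Ioo).mono fun z hz => qExt_eq hab' hνI hνsupp hνint hz)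
    simpa [Real.norm_eq_abs] using (hmμ.sub hmν).norm
  have hdbd : ∀ z ∈ Set.Ioo (0:ℝ) 1, |quantileOf μ z - quantileOf ν z| ≤ b - a := by
    intro z hz
    obtain ⟨hpa, hpb⟩ := hQμmem z hz
    obtain ⟨hqa, hqb⟩ := hQνmem z hz
    rw [abs_sub_le_iff]
    constructor <;> linarith
  have hdint : IntegrableOn (fun z => |quantileOf μ z - quantileOf ν z|) (Set.Ioo (0:ℝ) 1) := by
    refine Integrable.mono' (integrable_const (b - a)) haeQ
      ((ae_restrict_mem measurableSet_Ioo).mono fun z hz => ?_)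
    rw [Real.norm_eq_abs, abs_abs]
    exact hdbd z hz
  have hFGint : IntegrableOn (fun t => |cdfOf μ t - cdfOf ν t|) (Set.Ioc a b) :=
    ((hFc.sub hGc).abs).integrableOn_Ioc
  -- second conjunct
  have main2 : wassersteinPow 2 μ ν ≤ ((b - a) ^ 2 / 2) * L := by
    have hwp : wassersteinPow 2 μ ν
        = ∫ z in Set.Ioo (0:ℝ) 1, |quantileOf μ z - quantileOf ν z| ^ 2 := by
      unfold wassersteinPow
      exact setIntegral_congr_fun measurableSet_Ioo fun z _ => Real.rpow_two _
    rw [hwp]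
    by_cases h2i : IntegrableOn (fun z => |quantileOf μ z - quantileOf ν z| ^ 2)
        (Set.Ioo (0:ℝ) 1)
    · calc (∫ z in Set.Ioo (0:ℝ) 1, |quantileOf μ z - quantileOf ν z| ^ 2)
          ≤ ∫ z in Set.Ioo (0:ℝ) 1, (b - a) * |quantileOf μ z - quantileOf ν z| := by
            refine setIntegral_mono_on h2i (hdint.const_mul (b - a)) measurableSet_Ioo
              fun z hz => ?_
            nlinarith [hdbd z hz, abs_nonneg (quantileOf μ z - quantileOf ν z)]
        _ = (b - a) * ∫ z in Set.Ioo (0:ℝ) 1, |quantileOf μ z - quantileOf ν z| :=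
            integral_const_mul _ _
        _ = (b - a) * ∫ t in Set.Ioc a b, |cdfOf μ t - cdfOf ν t| := by rw [hW1]
        _ ≤ (b - a) * ((b - a) * (L / 2)) := by
            refine mul_le_mul_of_nonneg_left ?_ (sub_nonneg.2 hab')
            calc (∫ t in Set.Ioc a b, |cdfOf μ t - cdfOf ν t|)
                ≤ ∫ _t in Set.Ioc a b, L / 2 :=
                  setIntegral_mono_on hFGint (integrableOn_const
                    (by rw [Real.volume_Ioc]; exact ENNReal.ofReal_ne_top))
                    measurableSet_Ioc fun t _ => hFGle t
              _ = (b - a) * (L / 2) := by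
                  rw [setIntegral_const, smul_eq_mul, measureReal_def, Real.volume_Ioc,
                    ENNReal.toReal_ofReal (sub_nonneg.2 hab')]
        _ = (b - a) ^ 2 / 2 * L := by ring
    · rw [integral_undef h2i]
      exact mul_nonneg (by positivity) hLnn
  refine ⟨?_, main2⟩
  -- first conjunct
  have hwpnn : 0 ≤ wassersteinPow 2 μ ν := by
    unfold wassersteinPow
    exact setIntegral_nonneg measurableSet_Ioo fun z _ => Real.rpow_nonneg (abs_nonneg _) _
  have hCnn : 0 ≤ ((b - a) ^ 2 / 2) * L := mul_nonneg (by positivity) hLnn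
  have hle : wassersteinPow 2 μ ν ^ ((1:ℝ) / 2) ≤ (((b - a) ^ 2 / 2) * L) ^ ((1:ℝ) / 2) :=
    Real.rpow_le_rpow hwpnn main2 (by norm_num)
  have hws : wasserstein 2 μ ν = wassersteinPow 2 μ ν ^ ((1:ℝ) / 2) := by
    unfold wasserstein
    norm_num
  rw [hws]
  refine le_trans hle (le_of_eq ?_)
  rw [← Real.sqrt_eq_rpow]
  have hrhs : ((b - a) ^ 2 / 2) * L = (Real.sqrt 2 / 2 * (b - a) * Real.sqrt L) ^ 2 := by
    have h2s : Real.sqrt 2 ^ 2 = 2 := Real.sq_sqrt (by norm_num)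
    have hLs : Real.sqrt L ^ 2 = L := Real.sq_sqrt hLnn
    rw [mul_pow, mul_pow, div_pow, h2s, hLs]
    ring
  rw [hrhs, Real.sqrt_sq (mul_nonneg (mul_nonneg
    (div_nonneg (Real.sqrt_nonneg 2) (by norm_num)) (sub_nonneg.2 hab')) (Real.sqrt_nonneg L))]
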